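/- Let X_n(x) denote the maximum dater recursion started at x ≥ 0 with random positive inputs (s_j, t_j). Then for every measurable set A and every n, |P(X_n(x) ∈ A) - P(X_n(0) ∈ A)| ≤ P(T_n ≤ x), where T_n = t_1 + ... + t_n. In particular the total variation distance between the laws of X_n(x) and X_n(0) is at most P(T_n ≤ x). -/

import Mathlib

open MeasureTheory

/-- For the maximum dater recursion with random positive inputs,
`|P(X_n(x) ∈ A) - P(X_n(0) ∈ A)| ≤ P(T_n ≤ x)` for every measurable `A`. -/
theorem stmt2 {Ω : Type*} [MeasurableSpace Ω] (ℙ : Measure Ω) [IsProbabilityMeasure ℙ]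
    (s t : ℕ → Ω → ℝ) (hs : ∀ j ω, 1 ≤ j → 0 < s j ω) (ht : ∀ j ω, 1 ≤ j → 0 < t j ω)
    (hmeas_s : ∀ j, Measurable (s j)) (hmeas_t : ∀ j, Measurable (t j))
    (X : ℝ → ℕ → Ω → ℝ) (hX0 : ∀ x ω, X x 0 ω = x)
    (hXrec : ∀ x n ω, X x (n + 1) ω = max (X x n ω - t (n + 1) ω) (s (n + 1) ω))
    (T : ℕ → Ω → ℝ) (hT : ∀ n ω, T n ω = ∑ i ∈ Finset.Icc 1 n, t i ω)
    (x : ℝ) (hx : 0 ≤ x) (n : ℕ) (A : Set ℝ) (hA : MeasurableSet A) :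
    |(ℙ {ω | X x n ω ∈ A}).toReal - (ℙ {ω | X 0 n ω ∈ A}).toReal|
      ≤ (ℙ {ω | T n ω ≤ x}).toReal := by
  -- Key identity: X x n ω = max (x - T n ω) (X 0 n ω)
  have key : ∀ n ω, X x n ω = max (x - T n ω) (X 0 n ω) := by
    intro n
    induction n with
    | zero =>
      intro ω
      have hT0 : T 0 ω = 0 := by simp [hT]
      rw [hX0, hX0, hT0, sub_zero, max_eq_left hx]
    | succ m ih =>
      intro ω
      have hTs : T (m + 1) ω = T m ω + t (m + 1) ω := by
        rw [hT, hT, Finset.sum_Icc_succ_top (Nat.one_le_iff_ne_zero.mpr (Nat.succ_ne_zero m))]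
      rw [hXrec, hXrec, ih, ← max_sub_sub_right, max_assoc, hTs, ← sub_sub]
  -- positivity of X 0 n for n ≥ 1
  have pos : ∀ m ω, 0 < X 0 (m + 1) ω := by
    intro m ω
    rw [hXrec]
    exact lt_of_lt_of_le (hs (m + 1) ω (Nat.le_add_left 1 m)) (le_max_right _ _)
  -- coupling: if T n ω > x then X x n ω = X 0 n ω
  have couple : ∀ ω, x < T n ω → X x n ω = X 0 n ω := by
    intro ω hω
    cases n with
    | zero =>
      exfalso
      have : T 0 ω = 0 := by simp [hT]
      linarith
    | succ m =>
      rw [key]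
      exact max_eq_right (le_of_lt (lt_trans (by linarith) (pos m ω)))
  set S1 := {ω | X x n ω ∈ A}
  set S2 := {ω | X 0 n ω ∈ A}
  set E := {ω | T n ω ≤ x}
  have hsub1 : S1 ⊆ S2 ∪ E := by
    intro ω hω
    by_cases h : T n ω ≤ x
    · exact Or.inr h
    · exact Or.inl (by simpa [S1, S2, ← couple ω (lt_of_not_ge h)] using hω)
  have hsub2 : S2 ⊆ S1 ∪ E := by
    intro ω hω
    by_cases h : T n ω ≤ x
    · exact Or.inr h
    · exact Or.inl (by simpa [S1, S2, couple ω (lt_of_not_ge h)] using hω)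
  have h1 : ℙ S1 ≤ ℙ S2 + ℙ E := le_trans (measure_mono hsub1) (measure_union_le _ _)
  have h2 : ℙ S2 ≤ ℙ S1 + ℙ E := le_trans (measure_mono hsub2) (measure_union_le _ _)
  have f1 : ℙ S1 ≠ ⊤ := measure_ne_top ℙ S1
  have f2 : ℙ S2 ≠ ⊤ := measure_ne_top ℙ S2
  have fE : ℙ E ≠ ⊤ := measure_ne_top ℙ E
  have r1 : (ℙ S1).toReal ≤ (ℙ S2).toReal + (ℙ E).toReal := by
    rw [← ENNReal.toReal_add f2 fE]
    exact ENNReal.toReal_mono (by simp [f2, fE]) h1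
  have r2 : (ℙ S2).toReal ≤ (ℙ S1).toReal + (ℙ E).toReal := by
    rw [← ENNReal.toReal_add f1 fE]
    exact ENNReal.toReal_mono (by simp [f1, fE]) h2
  rw [abs_sub_le_iff]
  constructor <;> linarith
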